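/- Let σ > 1, w₀ < 0, and let z(t) = 1 + (|w₀|/(λ_σ + μ_σ)) e^{−λ_σ t} − (|w₀|/(λ_σ + μ_σ)) e^{μ_σ t} for t ≥ 0 (the solution of z'' + z' + 2(σ − 1)(1 − z) = 0 with z(0) = 1, z'(0) = w₀). Then there exists a time T with 0 < T < (1/μ_σ) log(1 + (λ_σ + μ_σ)/(σ |w₀|)) such that z(T) = 1 − 1/σ and z(t) > 1 − 1/σ for all t ∈ [0, T). -/

import Mathlib

/-- `λ_σ = (1 + √(8σ − 7))/2`, the opposite of the negative root of `r² + r − 2(σ−1)`. -/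
noncomputable def lam (σ : ℝ) : ℝ := (1 + Real.sqrt (8*σ - 7)) / 2

/-- `μ_σ = (−1 + √(8σ − 7))/2`, the positive root of `r² + r − 2(σ−1)`. -/
noncomputable def mu (σ : ℝ) : ℝ := (-1 + Real.sqrt (8*σ - 7)) / 2

/-- For the explicit solution
`z t = 1 + (|w₀|/(λ_σ + μ_σ)) e^{−λ_σ t} − (|w₀|/(λ_σ + μ_σ)) e^{μ_σ t}` (with `w₀ < 0`),
there is a first time `T`, with `0 < T < (1/μ_σ) log (1 + (λ_σ + μ_σ)/(σ |w₀|))`, at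
which `z` reaches the value `1 − 1/σ`, and `z t > 1 − 1/σ` for `t ∈ [0, T)`. -/
theorem exit_time_case_V (σ w₀ : ℝ) (hσ : 1 < σ) (hw₀ : w₀ < 0)
    (z : ℝ → ℝ)
    (hzdef : ∀ t : ℝ, z t = 1 + (|w₀| / (lam σ + mu σ)) * Real.exp (-(lam σ) * t)
        - (|w₀| / (lam σ + mu σ)) * Real.exp (mu σ * t)) :
    ∃ T : ℝ, 0 < T ∧
      T < (1 / mu σ) * Real.log (1 + (lam σ + mu σ) / (σ * |w₀|)) ∧
      z T = 1 - 1/σ ∧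
      ∀ t ∈ Set.Ico (0:ℝ) T, 1 - 1/σ < z t := by
  set s := Real.sqrt (8*σ - 7) with hs_def
  have hs1 : (1:ℝ) < s := by
    rw [hs_def, show (1:ℝ) = Real.sqrt 1 by simp]
    exact Real.sqrt_lt_sqrt (by norm_num) (by linarith)
  have hsum : lam σ + mu σ = s := by unfold lam mu; ring
  have hlam : 0 < lam σ := by unfold lam; linarith
  have hmu : 0 < mu σ := by unfold mu; linarith
  have hw : 0 < |w₀| := abs_pos.mpr (ne_of_lt hw₀)
  have hσ0 : (0:ℝ) < σ := by linarith
  set c := |w₀| / (lam σ + mu σ) with hc_def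
  have hc : 0 < c := by
    apply div_pos hw; rw [hsum]; linarith
  -- z is strictly antitone
  have hanti : ∀ a b : ℝ, a < b → z b < z a := by
    intro a b hab
    rw [hzdef a, hzdef b]
    have h1 : Real.exp (-(lam σ) * b) < Real.exp (-(lam σ) * a) :=
      Real.exp_lt_exp.mpr (by nlinarith)
    have h2 : Real.exp (mu σ * a) < Real.exp (mu σ * b) :=
      Real.exp_lt_exp.mpr (by nlinarith)
    nlinarith
  set A := 1 + (lam σ + mu σ) / (σ * |w₀|) with hA_def
  have hApos : (1:ℝ) < A := by
    rw [hA_def]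
    have : 0 < (lam σ + mu σ) / (σ * |w₀|) := by
      apply div_pos (by rw [hsum]; linarith) (by positivity)
    linarith
  set T' := (1 / mu σ) * Real.log A with hT'_def
  have hlogA : 0 < Real.log A := Real.log_pos hApos
  have hT'pos : 0 < T' := by
    rw [hT'_def]; positivity
  -- z 0 = 1
  have hz0 : z 0 = 1 := by rw [hzdef 0]; simp
  -- exp (mu σ * T') = A
  have hexpT' : Real.exp (mu σ * T') = A := by
    rw [hT'_def]
    rw [show mu σ * ((1 / mu σ) * Real.log A) = Real.log A by
      field_simp]
    exact Real.exp_log (by linarith)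
  -- c * (lam σ + mu σ) / |w₀| = 1 i.e. c * ((lam+mu)/(σ|w₀|)) = 1/σ
  have hcA : c * ((lam σ + mu σ) / (σ * |w₀|)) = 1/σ := by
    rw [hc_def]
    field_simp
  have hzT' : z T' < 1 - 1/σ := by
    rw [hzdef T', hexpT']
    have hlt : Real.exp (-(lam σ) * T') < 1 := by
      rw [show (1:ℝ) = Real.exp 0 by simp]
      exact Real.exp_lt_exp.mpr (by nlinarith)
    have hexp_pos : 0 < Real.exp (-(lam σ) * T') := Real.exp_pos _
    have : c * A = c + 1/σ := by rw [hA_def]; rw [mul_add, mul_one, hcA]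
    nlinarith
  -- IVT
  have hzc : Continuous z := by
    have hz_eq : z = fun t => 1 + c * Real.exp (-(lam σ) * t)
        - c * Real.exp (mu σ * t) := funext hzdef
    rw [hz_eq]
    continuity
  have hmem : (1 - 1/σ) ∈ Set.Ioo (z T') (z 0) := by
    constructor
    · exact hzT'
    · rw [hz0]
      have : 0 < 1/σ := by positivity
      linarith
  have := intermediate_value_Ioo' (le_of_lt hT'pos) hzc.continuousOn hmem
  obtain ⟨T, hTmem, hzT⟩ := this
  refine ⟨T, hTmem.1, hTmem.2, hzT, ?_⟩
  intro t ht
  rw [← hzT]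
  exact hanti t T ht.2
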